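/- Let ω ∈ ℝ with sin ω ≠ 0, and suppose φ₁, φ₂ : V → ℂ are both vertex eigenfunctions of frequency ω. For each oriented edge e and j = 1,2 set A_{e,j} = φ_j(e₀) and B_{e,j} = (φ_j(e₁) − φ_j(e₀)·cos ω)/sin ω. Then Σ_{e ∈ E} [ cos(ω)·A_{e,1}·conj(A_{e,2}) + sin(ω)·(A_{e,1}·conj(B_{e,2}) + conj(A_{e,2})·B_{e,1}) − cos(ω)·B_{e,1}·conj(B_{e,2}) ] = 0. -/

import Mathlib

open scoped BigOperators

private lemma qgfft_pointwise (s c x₁ y₁ x₂ y₂ : ℂ) (hs0 : s ≠ 0)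
    (hsc : s ^ 2 + c ^ 2 = 1) :
    (c * (x₁ * x₂) + s * (x₁ * ((y₂ - x₂ * c) / s) + x₂ * ((y₁ - x₁ * c) / s))
      - c * (((y₁ - x₁ * c) / s) * ((y₂ - x₂ * c) / s)))
    = (s ^ 2)⁻¹ * ((x₁ * y₂ - c * (x₁ * x₂)) + (y₁ * x₂ - c * (y₁ * y₂))) := by
  field_simp
  ring_nf
  linear_combination ((x₁ * y₂ + y₁ * x₂ - c * x₁ * x₂)) * hsc

private theorem qgfft_sum_pair_edges {V : Type*} [Fintype V] [DecidableEq V]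
    (G : SimpleGraph V) [DecidableRel G.Adj]
    {E : Type*} [Fintype E] (e₀ e₁ : E → V)
    (hadj : ∀ e : E, G.Adj (e₀ e) (e₁ e))
    (hinj : ∀ e e' : E, s(e₀ e, e₁ e) = s(e₀ e', e₁ e') → e = e')
    (hsurj : ∀ x ∈ G.edgeSet, ∃ e : E, s(e₀ e, e₁ e) = x)
    (g : V → V → ℂ) :
    ∑ e : E, (g (e₀ e) (e₁ e) + g (e₁ e) (e₀ e))
      = ∑ v : V, ∑ w ∈ G.neighborFinset v, g v w := by
  classical
  have hrhs : ∑ v : V, ∑ w ∈ G.neighborFinset v, g v w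
      = ∑ p ∈ (Finset.univ : Finset (V × V)).filter (fun p => G.Adj p.1 p.2), g p.1 p.2 := by
    rw [Finset.sum_filter, ← Finset.univ_product_univ, Finset.sum_product]
    refine Finset.sum_congr rfl fun v _ => ?_
    rw [SimpleGraph.neighborFinset_eq_filter, Finset.sum_filter]
  have hlhs : ∑ e : E, (g (e₀ e) (e₁ e) + g (e₁ e) (e₀ e))
      = ∑ p : E × Bool, (if p.2 then g (e₀ p.1) (e₁ p.1) else g (e₁ p.1) (e₀ p.1)) := by
    rw [← Finset.univ_product_univ, Finset.sum_product]
    simp [add_comm]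
  rw [hlhs, hrhs]
  refine Finset.sum_bij
    (fun p _ => if p.2 then (e₀ p.1, e₁ p.1) else (e₁ p.1, e₀ p.1)) ?_ ?_ ?_ ?_
  · rintro ⟨e, b⟩ _ha
    cases b <;> simp [hadj e, (hadj e).symm]
  · rintro ⟨e, b⟩ _ha ⟨e', b'⟩ _hb h
    have hne : e₀ e ≠ e₁ e := (hadj e).ne
    rcases Bool.eq_false_or_eq_true b with hb | hb <;>
      rcases Bool.eq_false_or_eq_true b' with hb' | hb' <;>
        subst hb <;> subst hb' <;> simp only [if_true, if_false, Bool.false_eq_true,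
          ite_true, ite_false, Prod.mk.injEq] at h ⊢
    · exact ⟨hinj e e' (by rw [Sym2.eq_swap, ← h.1, ← h.2, Sym2.eq_swap]), trivial⟩
    · exfalso
      have he : e = e' := hinj e e' (by rw [Sym2.eq_swap, h.1, h.2])
      subst he
      exact hne h.2.symm
    · exfalso
      have he : e = e' := hinj e e' (by rw [Sym2.eq_swap, ← h.1, ← h.2])
      subst he
      exact hne h.1.symm
    · exact ⟨hinj e e' (by rw [h.1, h.2]), trivial⟩
  · rintro ⟨u, w⟩ hp
    simp only [Finset.mem_filter, Finset.mem_univ, true_and] at hp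
    obtain ⟨e, he⟩ := hsurj s(u, w) hp
    rw [Sym2.eq_iff] at he
    rcases he with ⟨h1, h2⟩ | ⟨h1, h2⟩
    · exact ⟨(e, true), Finset.mem_univ _, by simp [h1, h2]⟩
    · exact ⟨(e, false), Finset.mem_univ _, by simp [h1, h2]⟩
  · rintro ⟨e, b⟩ _ha
    cases b <;> simp

/-- for two vertex eigenfunctions of frequency `ω` with `sin ω ≠ 0`,
the coefficient combination
`cos ω · A₁Ā₂ + sin ω · (A₁B̄₂ + Ā₂B₁) − cos ω · B₁B̄₂` sums to zero over the edges. -/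
theorem qgfft_coefficient_orthogonality
    {V : Type*} [Fintype V] [DecidableEq V]
    (G : SimpleGraph V) [DecidableRel G.Adj]
    (hdeg : ∀ v : V, 0 < G.degree v)
    {E : Type*} [Fintype E] (e₀ e₁ : E → V)
    (hadj : ∀ e : E, G.Adj (e₀ e) (e₁ e))
    (hinj : ∀ e e' : E, s(e₀ e, e₁ e) = s(e₀ e', e₁ e') → e = e')
    (hsurj : ∀ x ∈ G.edgeSet, ∃ e : E, s(e₀ e, e₁ e) = x)
    (ω : ℝ) (hω : Real.sin ω ≠ 0)
    (φ₁ φ₂ : V → ℂ)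
    (hφ₁ : ∀ v : V, ∑ w ∈ G.neighborFinset v, φ₁ w
      = (Real.cos ω : ℂ) * (G.degree v : ℂ) * φ₁ v)
    (hφ₂ : ∀ v : V, ∑ w ∈ G.neighborFinset v, φ₂ w
      = (Real.cos ω : ℂ) * (G.degree v : ℂ) * φ₂ v) :
    ∑ e : E, ((Real.cos ω : ℂ) * (φ₁ (e₀ e) * (starRingEnd ℂ) (φ₂ (e₀ e)))
      + (Real.sin ω : ℂ) *
          (φ₁ (e₀ e) * (starRingEnd ℂ)
              ((φ₂ (e₁ e) - φ₂ (e₀ e) * (Real.cos ω : ℂ)) / (Real.sin ω : ℂ))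
            + (starRingEnd ℂ) (φ₂ (e₀ e))
              * ((φ₁ (e₁ e) - φ₁ (e₀ e) * (Real.cos ω : ℂ)) / (Real.sin ω : ℂ)))
      - (Real.cos ω : ℂ) *
          (((φ₁ (e₁ e) - φ₁ (e₀ e) * (Real.cos ω : ℂ)) / (Real.sin ω : ℂ))
            * (starRingEnd ℂ)
              ((φ₂ (e₁ e) - φ₂ (e₀ e) * (Real.cos ω : ℂ)) / (Real.sin ω : ℂ)))) = 0 := by
  classical
  set s : ℂ := (Real.sin ω : ℂ) with hs
  set c : ℂ := (Real.cos ω : ℂ) with hc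
  have hs0 : s ≠ 0 := Complex.ofReal_ne_zero.mpr hω
  have hsc : s ^ 2 + c ^ 2 = 1 := by
    rw [hs, hc, ← Complex.ofReal_pow, ← Complex.ofReal_pow, ← Complex.ofReal_add,
      Real.sin_sq_add_cos_sq, Complex.ofReal_one]
  set g : V → V → ℂ := fun u v =>
    φ₁ u * (starRingEnd ℂ) (φ₂ v) - c * (φ₁ u * (starRingEnd ℂ) (φ₂ u)) with hg
  have key : ∀ e : E,
      (c * (φ₁ (e₀ e) * (starRingEnd ℂ) (φ₂ (e₀ e)))
        + s * (φ₁ (e₀ e) * (starRingEnd ℂ) ((φ₂ (e₁ e) - φ₂ (e₀ e) * c) / s)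
            + (starRingEnd ℂ) (φ₂ (e₀ e)) * ((φ₁ (e₁ e) - φ₁ (e₀ e) * c) / s))
        - c * (((φ₁ (e₁ e) - φ₁ (e₀ e) * c) / s)
            * (starRingEnd ℂ) ((φ₂ (e₁ e) - φ₂ (e₀ e) * c) / s)))
      = (s ^ 2)⁻¹ * (g (e₀ e) (e₁ e) + g (e₁ e) (e₀ e)) := by
    intro e
    have hconj : (starRingEnd ℂ) ((φ₂ (e₁ e) - φ₂ (e₀ e) * c) / s)
        = ((starRingEnd ℂ) (φ₂ (e₁ e)) - (starRingEnd ℂ) (φ₂ (e₀ e)) * c) / s := by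
      rw [hs, hc]
      simp only [map_div₀, map_sub, map_mul, Complex.conj_ofReal]
    rw [hconj, hg]
    exact qgfft_pointwise s c (φ₁ (e₀ e)) (φ₁ (e₁ e))
      ((starRingEnd ℂ) (φ₂ (e₀ e))) ((starRingEnd ℂ) (φ₂ (e₁ e))) hs0 hsc
  calc ∑ e : E, (c * (φ₁ (e₀ e) * (starRingEnd ℂ) (φ₂ (e₀ e)))
        + s * (φ₁ (e₀ e) * (starRingEnd ℂ) ((φ₂ (e₁ e) - φ₂ (e₀ e) * c) / s)
            + (starRingEnd ℂ) (φ₂ (e₀ e)) * ((φ₁ (e₁ e) - φ₁ (e₀ e) * c) / s))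
        - c * (((φ₁ (e₁ e) - φ₁ (e₀ e) * c) / s)
            * (starRingEnd ℂ) ((φ₂ (e₁ e) - φ₂ (e₀ e) * c) / s)))
      = ∑ e : E, (s ^ 2)⁻¹ * (g (e₀ e) (e₁ e) + g (e₁ e) (e₀ e)) :=
        Finset.sum_congr rfl fun e _ => key e
    _ = (s ^ 2)⁻¹ * ∑ e : E, (g (e₀ e) (e₁ e) + g (e₁ e) (e₀ e)) := by
        rw [Finset.mul_sum]
    _ = (s ^ 2)⁻¹ * ∑ v : V, ∑ w ∈ G.neighborFinset v, g v w := by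
        rw [qgfft_sum_pair_edges G e₀ e₁ hadj hinj hsurj g]
    _ = 0 := by
        have hv : ∀ v : V, ∑ w ∈ G.neighborFinset v, g v w = 0 := by
          intro v
          have hdegsum : ∑ w ∈ G.neighborFinset v, g v w
              = φ₁ v * (starRingEnd ℂ) (∑ w ∈ G.neighborFinset v, φ₂ w)
                - (G.degree v : ℂ) * (c * (φ₁ v * (starRingEnd ℂ) (φ₂ v))) := by
            rw [Finset.sum_sub_distrib, ← Finset.mul_sum, ← map_sum,
              Finset.sum_const, SimpleGraph.card_neighborFinset_eq_degree,
              nsmul_eq_mul]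
          rw [hdegsum, hφ₂ v]
          rw [hc]
          simp only [map_mul, Complex.conj_ofReal, Complex.conj_natCast]
          ring
        simp [hv]
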